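/- arXiv:2401.13496 — 2 statements merged into one kernel-verified Lean document; each statement's English description precedes it below -/
import Mathlib

section
/- Let n be a positive integer, let A_C, A_G : ℝ → Matrix (Fin n) (Fin n) ℝ be differentiable at p₀, let i_nl : (Fin n → ℝ) → (Fin n → ℝ) be a continuously differentiable nonlinear current function, let i_s : ℝ → (Fin n → ℝ) be independent of p, and let x : ℝ → ℝ → (Fin n → ℝ) be jointly twice continuously differentiable. Suppose that for every p near p₀ and every t, A_C(p) *ᵥ (∂x/∂t)(p,t) + A_G(p) *ᵥ x(p,t) − i_nl(x(p,t)) = i_s(t). Then the sensitivity y(t) := (∂x/∂p)(p₀,t) satisfies A_C(p₀) *ᵥ y'(t) + J_G(t) *ᵥ y(t) + (dA_C/dp)(p₀) *ᵥ (∂x/∂t)(p₀,t) + (dA_G/dp)(p₀) *ᵥ x(p₀,t) = 0 for every t, where J_G(t) is the Jacobian matrix A_G(p₀) minus the Fréchet derivative of i_nl evaluated at x(p₀,t). -/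
open Matrix

attribute [local instance] Matrix.normedAddCommGroup Matrix.normedSpace

private lemma hasDerivAt_mulVec' {n : ℕ} {A : ℝ → Matrix (Fin n) (Fin n) ℝ}
    {v : ℝ → Fin n → ℝ} {A' : Matrix (Fin n) (Fin n) ℝ} {v' : Fin n → ℝ} {p : ℝ}
    (hA : HasDerivAt A A' p) (hv : HasDerivAt v v' p) :
    HasDerivAt (fun q => A q *ᵥ v q) (A' *ᵥ v p + A p *ᵥ v') p := by
  have hAe : ∀ i j, HasDerivAt (fun q => A q i j) (A' i j) p := by
    intro i j
    exact hasDerivAt_pi.1 (hasDerivAt_pi.1 hA i) j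
  have hve : ∀ j, HasDerivAt (fun q => v q j) (v' j) p := fun j => hasDerivAt_pi.1 hv j
  rw [hasDerivAt_pi]
  intro i
  have h := HasDerivAt.sum (u := Finset.univ)
    (fun j (_ : j ∈ Finset.univ) => (hAe i j).mul (hve j))
  convert h using 1
  simp [mulVec, dotProduct, Finset.sum_add_distrib]
  · funext q; simp [Finset.sum_apply]
  · simp [mulVec, dotProduct, Finset.sum_add_distrib]

/-- **Transient direct sensitivity equation for a nonlinear MNA system.**
If `A_C(p) *ᵥ ∂x/∂t(p,t) + A_G(p) *ᵥ x(p,t) − i_nl(x(p,t)) = i_s(t)` holds for all `p`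
near `p₀` and all `t`, with `A_C, A_G` differentiable at `p₀`, `i_nl` continuously
differentiable and `x` jointly `C²`, then the sensitivity `y(t) = ∂x/∂p(p₀,t)` satisfies
`A_C(p₀) *ᵥ y'(t) + J_G(t) *ᵥ y(t) + A_C'(p₀) *ᵥ ∂x/∂t(p₀,t) + A_G'(p₀) *ᵥ x(p₀,t) = 0`,
where `J_G(t) = A_G(p₀) - ∂i_nl/∂x (x(p₀,t))` is the Jacobian matrix. -/
theorem transient_direct_sensitivity_nonlinear
    (n : ℕ) (hn : 0 < n)
    (A_C A_G : ℝ → Matrix (Fin n) (Fin n) ℝ) (p₀ : ℝ)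
    (hAC : DifferentiableAt ℝ A_C p₀) (hAG : DifferentiableAt ℝ A_G p₀)
    (i_nl : (Fin n → ℝ) → (Fin n → ℝ)) (hinl : ContDiff ℝ 1 i_nl)
    (i_s : ℝ → (Fin n → ℝ))
    (x : ℝ → ℝ → (Fin n → ℝ))
    (hx : ContDiff ℝ 2 (fun q : ℝ × ℝ => x q.1 q.2))
    (hMNA : ∀ᶠ p in nhds p₀, ∀ t : ℝ,
      A_C p *ᵥ deriv (fun s => x p s) t + A_G p *ᵥ x p t - i_nl (x p t) = i_s t)
    (J_G : ℝ → Matrix (Fin n) (Fin n) ℝ)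
    (hJG : ∀ t : ℝ,
      J_G t = A_G p₀ - LinearMap.toMatrix' (fderiv ℝ i_nl (x p₀ t) : (Fin n → ℝ) →ₗ[ℝ] (Fin n → ℝ))) :
    ∀ t : ℝ,
      A_C p₀ *ᵥ deriv (fun s => deriv (fun p => x p s) p₀) t
        + J_G t *ᵥ deriv (fun p => x p t) p₀
        + deriv A_C p₀ *ᵥ deriv (fun s => x p₀ s) t
        + deriv A_G p₀ *ᵥ x p₀ t = 0 := by
  intro t
  set f : ℝ × ℝ → (Fin n → ℝ) := fun q => x q.1 q.2 with hfdef
  have hfd : Differentiable ℝ f := hx.differentiable (by norm_num)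
  -- first partials
  have hdt : ∀ p s : ℝ, HasDerivAt (fun s' => x p s') (fderiv ℝ f (p, s) (0, 1)) s := by
    intro p s
    have h1 : HasDerivAt (fun s' : ℝ => ((p, s') : ℝ × ℝ)) (0, 1) s :=
      HasDerivAt.prodMk (hasDerivAt_const s p) (hasDerivAt_id s)
    exact (hfd (p, s)).hasFDerivAt.comp_hasDerivAt s h1
  have hdp : ∀ p s : ℝ, HasDerivAt (fun p' => x p' s) (fderiv ℝ f (p, s) (1, 0)) p := by
    intro p s
    have h1 : HasDerivAt (fun p' : ℝ => ((p', s) : ℝ × ℝ)) (1, 0) p :=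
      HasDerivAt.prodMk (hasDerivAt_id p) (hasDerivAt_const p s)
    exact (hfd (p, s)).hasFDerivAt.comp_hasDerivAt p h1
  -- second derivative facts
  have hf1 : ContDiff ℝ 1 (fderiv ℝ f) := hx.fderiv_right (by norm_num)
  have hsym : IsSymmSndFDerivAt ℝ f (p₀, t) := hx.contDiffAt.isSymmSndFDerivAt (by simp)
  have hfd2 : DifferentiableAt ℝ (fderiv ℝ f) (p₀, t) := (hf1.differentiable one_ne_zero) (p₀, t)
  -- mixed partial in p of time-derivative
  have hmix1 : HasDerivAt (fun p => fderiv ℝ f (p, t) (0, 1))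
      (fderiv ℝ (fderiv ℝ f) (p₀, t) (1, 0) (0, 1)) p₀ := by
    have h1 : HasDerivAt (fun p : ℝ => ((p, t) : ℝ × ℝ)) (1, 0) p₀ :=
      HasDerivAt.prodMk (hasDerivAt_id p₀) (hasDerivAt_const p₀ t)
    have h2 : HasDerivAt (fun p => fderiv ℝ f (p, t))
        (fderiv ℝ (fderiv ℝ f) (p₀, t) (1, 0)) p₀ :=
      hfd2.hasFDerivAt.comp_hasDerivAt p₀ h1
    have h3 := h2.clm_apply (hasDerivAt_const p₀ ((0 : ℝ), (1 : ℝ)))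
    simpa using h3
  -- mixed partial in t of p-derivative
  have hmix2 : HasDerivAt (fun s => fderiv ℝ f (p₀, s) (1, 0))
      (fderiv ℝ (fderiv ℝ f) (p₀, t) (0, 1) (1, 0)) t := by
    have hfd2' : DifferentiableAt ℝ (fderiv ℝ f) (p₀, t) := hfd2
    have h1 : HasDerivAt (fun s : ℝ => ((p₀, s) : ℝ × ℝ)) (0, 1) t :=
      HasDerivAt.prodMk (hasDerivAt_const t p₀) (hasDerivAt_id t)
    have h2 : HasDerivAt (fun s => fderiv ℝ f (p₀, s))
        (fderiv ℝ (fderiv ℝ f) (p₀, t) (0, 1)) t :=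
      hfd2'.hasFDerivAt.comp_hasDerivAt t h1
    have h3 := h2.clm_apply (hasDerivAt_const t ((1 : ℝ), (0 : ℝ)))
    simpa using h3
  set y : Fin n → ℝ := fderiv ℝ f (p₀, t) (1, 0) with hy
  set w : Fin n → ℝ := fderiv ℝ f (p₀, t) (0, 1) with hw
  set m : Fin n → ℝ := fderiv ℝ (fderiv ℝ f) (p₀, t) (1, 0) (0, 1) with hm
  -- the function whose p-derivative we take
  have hX : HasDerivAt (fun p => x p t) y p₀ := hdp p₀ t
  have hInl : HasDerivAt (fun p => i_nl (x p t)) (fderiv ℝ i_nl (x p₀ t) y) p₀ :=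
    (hinl.differentiable one_ne_zero (x p₀ t)).hasFDerivAt.comp_hasDerivAt p₀ hX
  have hE : HasDerivAt
      (fun p => A_C p *ᵥ (fderiv ℝ f (p, t) (0, 1)) + A_G p *ᵥ x p t - i_nl (x p t))
      ((deriv A_C p₀ *ᵥ w + A_C p₀ *ᵥ m) + (deriv A_G p₀ *ᵥ x p₀ t + A_G p₀ *ᵥ y)
        - fderiv ℝ i_nl (x p₀ t) y) p₀ :=
    ((hasDerivAt_mulVec' hAC.hasDerivAt hmix1).add
      (hasDerivAt_mulVec' hAG.hasDerivAt hX)).sub hInl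
  have hEeq : (fun p => A_C p *ᵥ (fderiv ℝ f (p, t) (0, 1)) + A_G p *ᵥ x p t - i_nl (x p t))
      =ᶠ[nhds p₀] fun _ => i_s t := by
    filter_upwards [hMNA] with p hp
    have h := hp t
    rwa [(hdt p t).deriv] at h
  have hE0 : HasDerivAt
      (fun p => A_C p *ᵥ (fderiv ℝ f (p, t) (0, 1)) + A_G p *ᵥ x p t - i_nl (x p t))
      0 p₀ := (hasDerivAt_const p₀ (i_s t)).congr_of_eventuallyEq hEeq
  have hD : (deriv A_C p₀ *ᵥ w + A_C p₀ *ᵥ m) + (deriv A_G p₀ *ᵥ x p₀ t + A_G p₀ *ᵥ y)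
      - fderiv ℝ i_nl (x p₀ t) y = 0 := hE.unique hE0
  -- rewrite the goal
  have hg1 : deriv (fun s => deriv (fun p => x p s) p₀) t = m := by
    have : (fun s => deriv (fun p => x p s) p₀) = fun s => fderiv ℝ f (p₀, s) (1, 0) :=
      funext fun s => (hdp p₀ s).deriv
    rw [this, hmix2.deriv, hm, hsym.eq]
  have hg2 : deriv (fun p => x p t) p₀ = y := hX.deriv
  have hg3 : deriv (fun s => x p₀ s) t = w := (hdt p₀ t).deriv
  have hg4 : J_G t *ᵥ y = A_G p₀ *ᵥ y - fderiv ℝ i_nl (x p₀ t) y := by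
    rw [hJG t, Matrix.sub_mulVec]
    congr 1
    rw [← Matrix.toLin'_apply, Matrix.toLin'_toMatrix']
    rfl
  rw [hg1, hg2, hg3, hg4, ← hD]
  abel
end

section
/- Let n be a positive integer, A_C a constant real n×n matrix, J_G : ℝ → Matrix (Fin n) (Fin n) ℝ continuous, c : ℝ → (Fin n → ℝ) continuous, s : ℝ → (Fin n → ℝ) continuous, and T > 0. Let y : ℝ → (Fin n → ℝ) be continuously differentiable with y(0) = 0 and A_C *ᵥ y'(t) + J_G(t) *ᵥ y(t) + s(t) = 0 for all t ∈ [0,T], and let λ : ℝ → (Fin n → ℝ) be continuously differentiable with λ(T) = 0 and (A_C)ᵀ *ᵥ λ'(t) − (J_G(t))ᵀ *ᵥ λ(t) = c(t) for all t ∈ [0,T]. Then ∫₀ᵀ c(t) ⬝ᵥ y(t) dt = ∫₀ᵀ λ(t) ⬝ᵥ s(t) dt. -/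
open Matrix

/-- **Transient adjoint sensitivity identity.**
If `y` solves the sensitivity system `A_C *ᵥ y' + J_G *ᵥ y + s = 0` on `[0,T]` with
`y(0) = 0`, and `λ` solves the adjoint system `A_Cᵀ *ᵥ λ' − J_Gᵀ *ᵥ λ = c` on `[0,T]`
with the terminal condition `λ(T) = 0`, then `∫₀ᵀ c ⬝ᵥ y dt = ∫₀ᵀ λ ⬝ᵥ s dt`. -/
theorem transient_adjoint_sensitivity
    (n : ℕ) (hn : 0 < n)
    (A_C : Matrix (Fin n) (Fin n) ℝ)
    (J_G : ℝ → Matrix (Fin n) (Fin n) ℝ) (hJG : Continuous J_G)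
    (c s : ℝ → (Fin n → ℝ)) (hc : Continuous c) (hs : Continuous s)
    (T : ℝ) (hT : 0 < T)
    (y y' : ℝ → (Fin n → ℝ))
    (hy : ∀ t ∈ Set.Icc (0 : ℝ) T, HasDerivAt y (y' t) t)
    (hy' : ContinuousOn y' (Set.Icc (0 : ℝ) T))
    (hy0 : y 0 = 0)
    (hyeq : ∀ t ∈ Set.Icc (0 : ℝ) T, A_C *ᵥ y' t + J_G t *ᵥ y t + s t = 0)
    (lam lam' : ℝ → (Fin n → ℝ))
    (hlam : ∀ t ∈ Set.Icc (0 : ℝ) T, HasDerivAt lam (lam' t) t)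
    (hlam' : ContinuousOn lam' (Set.Icc (0 : ℝ) T))
    (hlamT : lam T = 0)
    (hlameq : ∀ t ∈ Set.Icc (0 : ℝ) T, A_Cᵀ *ᵥ lam' t - (J_G t)ᵀ *ᵥ lam t = c t) :
    ∫ t in (0 : ℝ)..T, c t ⬝ᵥ y t = ∫ t in (0 : ℝ)..T, lam t ⬝ᵥ s t := by
  set g : ℝ → ℝ := fun t => lam t ⬝ᵥ (A_C *ᵥ y t) with hg
  -- derivative of g
  have hgderiv : ∀ t ∈ Set.Icc (0 : ℝ) T,
      HasDerivAt g (c t ⬝ᵥ y t - lam t ⬝ᵥ s t) t := by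
    intro t ht
    have hylin : ∀ i, HasDerivAt (fun u => (A_C *ᵥ y u) i) ((A_C *ᵥ y' t) i) t := by
      intro i
      have : HasDerivAt (fun u => ∑ j, A_C i j * y u j) (∑ j, A_C i j * y' t j) t := by
        apply HasDerivAt.fun_sum
        intro j _
        exact ((hasDerivAt_pi.mp (hy t ht)) j).const_mul (A_C i j)
      simpa [Matrix.mulVec, dotProduct] using this
    have hd : HasDerivAt g
        (lam' t ⬝ᵥ (A_C *ᵥ y t) + lam t ⬝ᵥ (A_C *ᵥ y' t)) t := by
      have : HasDerivAt (fun u => ∑ i, lam u i * (A_C *ᵥ y u) i)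
          (∑ i, (lam' t i * (A_C *ᵥ y t) i + lam t i * (A_C *ᵥ y' t) i)) t := by
        apply HasDerivAt.fun_sum
        intro i _
        exact ((hasDerivAt_pi.mp (hlam t ht)) i).mul (hylin i)
      simpa [hg, dotProduct, Finset.sum_add_distrib] using this
    convert hd using 1
    have h1 : lam' t ⬝ᵥ (A_C *ᵥ y t) = (A_Cᵀ *ᵥ lam' t) ⬝ᵥ y t := by
      rw [Matrix.mulVec_transpose, Matrix.dotProduct_mulVec]
    have h2 : A_Cᵀ *ᵥ lam' t = c t + (J_G t)ᵀ *ᵥ lam t := by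
      have := hlameq t ht; linear_combination (norm := module) this
    have h3 : A_C *ᵥ y' t = -(J_G t *ᵥ y t) - s t := by
      have := hyeq t ht; linear_combination (norm := module) this
    rw [h1, h2, h3]
    have h4 : lam t ⬝ᵥ (J_G t *ᵥ y t) = ((J_G t)ᵀ *ᵥ lam t) ⬝ᵥ y t := by
      rw [Matrix.mulVec_transpose, Matrix.dotProduct_mulVec]
    simp [add_dotProduct, dotProduct_sub, dotProduct_neg, h4]
    ring
  -- continuity facts
  have hyc : ContinuousOn y (Set.Icc (0:ℝ) T) := fun t ht =>
    ((hy t ht).continuousAt).continuousWithinAt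
  have hlamc : ContinuousOn lam (Set.Icc (0:ℝ) T) := fun t ht =>
    ((hlam t ht).continuousAt).continuousWithinAt
  have hint1 : IntervalIntegrable (fun t => c t ⬝ᵥ y t) MeasureTheory.volume 0 T := by
    apply ContinuousOn.intervalIntegrable
    rw [Set.uIcc_of_le hT.le]
    have : ContinuousOn (fun t => ∑ i, c t i * y t i) (Set.Icc (0:ℝ) T) :=
      continuousOn_finset_sum Finset.univ fun i _ =>
        ((continuous_apply i).comp hc).continuousOn.mul ((continuous_apply i).comp_continuousOn hyc)
    simpa [dotProduct] using this
  have hint2 : IntervalIntegrable (fun t => lam t ⬝ᵥ s t) MeasureTheory.volume 0 T := by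
    apply ContinuousOn.intervalIntegrable
    rw [Set.uIcc_of_le hT.le]
    have : ContinuousOn (fun t => ∑ i, lam t i * s t i) (Set.Icc (0:ℝ) T) :=
      continuousOn_finset_sum Finset.univ fun i _ =>
        ((continuous_apply i).comp_continuousOn hlamc).mul ((continuous_apply i).comp hs).continuousOn
    simpa [dotProduct] using this
  have key : ∫ t in (0:ℝ)..T, (c t ⬝ᵥ y t - lam t ⬝ᵥ s t) = g T - g 0 := by
    apply intervalIntegral.integral_eq_sub_of_hasDerivAt
    · intro t ht
      rw [Set.uIcc_of_le hT.le] at ht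
      exact hgderiv t ht
    · exact hint1.sub hint2
  have hg0 : g 0 = 0 := by simp [hg, hy0]
  have hgT : g T = 0 := by simp [hg, hlamT]
  have := key
  rw [intervalIntegral.integral_sub hint1 hint2, hg0, hgT] at this
  linarith
end
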